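/- Let (Ω, μ) be a probability space and K ≥ 1. For each i ∈ {0, 1, ..., K} let ℓ_i : ℕ → Ω → ℝ be a sequence of measurable functions and let p_i ∈ ℝ. Define PIC_i(n, ω) = -2·ℓ_i(n, ω) + p_i·log n and the random posterior weights π_i(n, ω) = exp(-PIC_i(n, ω)/2) / Σ_{j=0}^{K} exp(-PIC_j(n, ω)/2). Suppose that for each i ∈ {1, ..., K} there exists a real constant Δ_i > 0 such that the functions ω ↦ (ℓ_0(n, ω) - ℓ_i(n, ω))/n converge in measure to the constant function Δ_i. Then for every ε ∈ (0, 1), μ({ω : π_0(n, ω) > 1 - ε}) → 1 as n → ∞. -/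

import Mathlib

open MeasureTheory Filter Topology

private lemma aux_atBot (Δ c : ℝ) (hΔ : 0 < Δ) :
    Tendsto (fun n : ℕ => -(n : ℝ) * Δ + c * Real.log n) atTop atBot := by
  have hlo : (fun x : ℝ => c * Real.log x) =o[atTop] (fun x : ℝ => x) :=
    (Real.isLittleO_log_id_atTop.const_mul_left c)
  have hb := hlo.bound (by positivity : (0:ℝ) < Δ / 2)
  have hx : Tendsto (fun x : ℝ => -x * Δ + c * Real.log x) atTop atBot := by
    apply tendsto_atBot_mono' atTop (f₁ := fun x : ℝ => -x * Δ + Δ / 2 * x)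
    · filter_upwards [hb, eventually_ge_atTop (0:ℝ)] with x hx hx0
      have : c * Real.log x ≤ Δ / 2 * x := by
        calc c * Real.log x ≤ |c * Real.log x| := le_abs_self _
        _ ≤ Δ / 2 * |x| := by simpa [abs_mul] using hx
        _ = Δ / 2 * x := by rw [abs_of_nonneg hx0]
      linarith
    · have : Tendsto (fun x : ℝ => (-Δ + Δ / 2) * x) atTop atBot :=
        Tendsto.const_mul_atTop_of_neg (by linarith) tendsto_id
      exact this.congr (fun x => by ring)
  exact hx.comp tendsto_natCast_atTop_atTop

/-- Under the separated case of the consistency hypotheses (strictly positive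
expected log-likelihood gaps Δ_i for all alternatives), the Laplace-approximated
posterior model probability π_0 of the true model converges to 1 in probability. -/
theorem posterior_prob_of_true_model_tendsto_one_in_prob
    {Ω : Type*} [MeasurableSpace Ω] (μ : Measure Ω) [IsProbabilityMeasure μ]
    (K : ℕ) (hK : 1 ≤ K)
    (ℓ : ℕ → ℕ → Ω → ℝ) (p : ℕ → ℝ)
    (hmeas : ∀ i, i ≤ K → ∀ n, Measurable (ℓ i n))
    (PIC : ℕ → ℕ → Ω → ℝ)
    (hPIC : ∀ i n ω, PIC i n ω = -2 * ℓ i n ω + p i * Real.log n)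
    (pw : ℕ → ℕ → Ω → ℝ)
    (hpw : ∀ i n ω, pw i n ω =
      Real.exp (-(PIC i n ω) / 2) /
        ∑ j ∈ Finset.range (K + 1), Real.exp (-(PIC j n ω) / 2))
    (hΔ : ∀ i, 1 ≤ i → i ≤ K → ∃ Δ : ℝ, 0 < Δ ∧
      TendstoInMeasure μ (fun n ω => (ℓ 0 n ω - ℓ i n ω) / (n : ℝ)) atTop
        (fun _ => Δ)) :
    ∀ ε : ℝ, 0 < ε → ε < 1 →
      Tendsto (fun n => μ {ω | 1 - ε < pw 0 n ω}) atTop (𝓝 1) := by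
  classical
  intro ε hε hε1
  set I : Finset ℕ := Finset.Icc 1 K with hI
  have hch : ∀ i, i ∈ I → ∃ Δ : ℝ, 0 < Δ ∧
      TendstoInMeasure μ (fun n ω => (ℓ 0 n ω - ℓ i n ω) / (n : ℝ)) atTop
        (fun _ => Δ) := by
    intro i hi
    rw [hI, Finset.mem_Icc] at hi
    exact hΔ i hi.1 hi.2
  set Δ : ℕ → ℝ := fun i => if h : i ∈ I then (hch i h).choose else 1 with hΔdef
  have hΔpos : ∀ i ∈ I, 0 < Δ i := by
    intro i hi; simp only [hΔdef, dif_pos hi]; exact (hch i hi).choose_spec.1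
  have hΔt : ∀ i ∈ I, TendstoInMeasure μ
      (fun n ω => (ℓ 0 n ω - ℓ i n ω) / (n : ℝ)) atTop (fun _ => Δ i) := by
    intro i hi; simp only [hΔdef, dif_pos hi]; exact (hch i hi).choose_spec.2
  set A : ℕ → ℕ → Set Ω :=
    fun i n => {ω | dist ((ℓ 0 n ω - ℓ i n ω) / (n : ℝ)) (Δ i) < Δ i / 2} with hA
  set B : ℕ → ℕ → Set Ω :=
    fun i n => {ω | Δ i / 2 ≤ dist ((ℓ 0 n ω - ℓ i n ω) / (n : ℝ)) (Δ i)} with hB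
  set T : ℕ → Set Ω := fun n => ⋂ i ∈ I, A i n with hT
  have hKpos : (0 : ℝ) < K := by exact_mod_cast hK
  have hεK : (0 : ℝ) < ε / K := by positivity
  set L : ℝ := Real.log (ε / K) with hL
  -- eventual deterministic bound
  have hEv : ∀ᶠ n : ℕ in atTop, ∀ i ∈ I,
      -(n : ℝ) * Δ i + (p 0 - p i) * Real.log n < 2 * L := by
    rw [eventually_all_finset]
    intro i hi
    exact (aux_atBot (Δ i) (p 0 - p i) (hΔpos i hi)).eventually
      (eventually_lt_atBot (2 * L))
  -- key inclusion
  have hincl : ∀ᶠ n : ℕ in atTop, T n ⊆ {ω | 1 - ε < pw 0 n ω} := by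
    filter_upwards [hEv, eventually_ge_atTop 1] with n hn hn1 ω hω
    simp only [Set.mem_setOf_eq]
    have hnR : (0 : ℝ) < (n : ℝ) := by exact_mod_cast hn1
    have hkey : ∀ i ∈ I,
        Real.exp (-(PIC i n ω) / 2) < ε / K * Real.exp (-(PIC 0 n ω) / 2) := by
      intro i hi
      have hωA : ω ∈ A i n := Set.mem_iInter₂.1 hω i hi
      have hg : Δ i / 2 < (ℓ 0 n ω - ℓ i n ω) / (n : ℝ) := by
        have hd : |(ℓ 0 n ω - ℓ i n ω) / (n : ℝ) - Δ i| < Δ i / 2 := by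
          simpa [hA, Real.dist_eq] using hωA
        have := (abs_lt.1 hd).1
        linarith
      have hdiff : Δ i / 2 * (n : ℝ) < ℓ 0 n ω - ℓ i n ω := (lt_div_iff₀ hnR).1 hg
      have hPICdiff : PIC 0 n ω - PIC i n ω < 2 * L := by
        rw [hPIC, hPIC]
        calc -2 * ℓ 0 n ω + p 0 * Real.log n - (-2 * ℓ i n ω + p i * Real.log n)
            = -2 * (ℓ 0 n ω - ℓ i n ω) + (p 0 - p i) * Real.log n := by ring
          _ < -2 * (Δ i / 2 * (n : ℝ)) + (p 0 - p i) * Real.log n := by nlinarith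
          _ = -(n : ℝ) * Δ i + (p 0 - p i) * Real.log n := by ring
          _ < 2 * L := hn i hi
      have hexp : Real.exp ((PIC 0 n ω - PIC i n ω) / 2) < ε / K := by
        have h2 : (PIC 0 n ω - PIC i n ω) / 2 < L := by linarith
        calc Real.exp ((PIC 0 n ω - PIC i n ω) / 2) < Real.exp L :=
              Real.exp_lt_exp.2 h2
          _ = ε / K := Real.exp_log hεK
      calc Real.exp (-(PIC i n ω) / 2)
          = Real.exp ((PIC 0 n ω - PIC i n ω) / 2) * Real.exp (-(PIC 0 n ω) / 2) := by
            rw [← Real.exp_add]; ring_nf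
        _ < ε / K * Real.exp (-(PIC 0 n ω) / 2) := by
            have := Real.exp_pos (-(PIC 0 n ω) / 2)
            exact mul_lt_mul_of_pos_right hexp this
    -- sum bound
    set e : ℕ → ℝ := fun j => Real.exp (-(PIC j n ω) / 2) with he
    have he0 : 0 < e 0 := Real.exp_pos _
    have hS : ∑ j ∈ Finset.range K, e (j + 1) < ε * e 0 := by
      have hne : (Finset.range K).Nonempty := by
        exact Finset.nonempty_range_iff.2 (by omega)
      calc ∑ j ∈ Finset.range K, e (j + 1)
          < ∑ _j ∈ Finset.range K, ε / K * e 0 := by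
            apply Finset.sum_lt_sum_of_nonempty hne
            intro j hj
            have hjI : j + 1 ∈ I := by
              rw [hI, Finset.mem_Icc]
              exact ⟨Nat.le_add_left 1 j, by
                have := Finset.mem_range.1 hj; omega⟩
            exact hkey (j + 1) hjI
        _ = ε * e 0 := by
            rw [Finset.sum_const, Finset.card_range, nsmul_eq_mul]
            field_simp
    have hSpos : 0 < ∑ j ∈ Finset.range K, e (j + 1) :=
      Finset.sum_pos (fun j _ => Real.exp_pos _) (by
        exact Finset.nonempty_range_iff.2 (by omega))
    rw [hpw]
    have hsum : ∑ j ∈ Finset.range (K + 1), Real.exp (-(PIC j n ω) / 2)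
        = (∑ j ∈ Finset.range K, e (j + 1)) + e 0 := by
      rw [Finset.sum_range_succ']
    rw [hsum]
    rw [lt_div_iff₀ (by linarith)]
    nlinarith
  -- measure of the good event tends to 1
  have hBtend : Tendsto (fun n => ∑ i ∈ I, μ (B i n)) atTop (𝓝 0) := by
    have : Tendsto (fun n => ∑ i ∈ I, μ (B i n)) atTop (𝓝 (∑ i ∈ I, 0)) := by
      apply tendsto_finset_sum
      intro i hi
      exact tendstoInMeasure_iff_dist.1 (hΔt i hi) (Δ i / 2) (by linarith [hΔpos i hi])
    simpa using this
  have hTc : ∀ n, μ (T n)ᶜ ≤ ∑ i ∈ I, μ (B i n) := by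
    intro n
    refine le_trans (measure_mono ?_) (measure_biUnion_finset_le I _)
    intro x hx
    simp only [hT, Set.compl_iInter, Set.mem_iUnion] at hx
    obtain ⟨i, hi, hxi⟩ := hx
    refine Set.mem_iUnion₂.2 ⟨i, hi, ?_⟩
    simp only [hA, Set.mem_compl_iff, Set.mem_setOf_eq, not_lt] at hxi
    exact hxi
  have hTcz : Tendsto (fun n => μ (T n)ᶜ) atTop (𝓝 0) :=
    tendsto_of_tendsto_of_tendsto_of_le_of_le tendsto_const_nhds hBtend
      (fun n => zero_le) hTc
  have hT1 : Tendsto (fun n => μ (T n)) atTop (𝓝 1) := by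
    have hlb : ∀ n, 1 - μ (T n)ᶜ ≤ μ (T n) := by
      intro n
      rw [tsub_le_iff_right]
      calc (1 : ENNReal) = μ Set.univ := (measure_univ (μ := μ)).symm
        _ ≤ μ (T n ∪ (T n)ᶜ) := by rw [Set.union_compl_self]
        _ ≤ μ (T n) + μ (T n)ᶜ := measure_union_le _ _
    have hlbt : Tendsto (fun n => 1 - μ (T n)ᶜ) atTop (𝓝 1) := by
      have := ENNReal.Tendsto.sub
        (tendsto_const_nhds : Tendsto (fun _ : ℕ => (1 : ENNReal)) atTop (𝓝 1))
        hTcz (Or.inl ENNReal.one_ne_top)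
      simpa using this
    exact tendsto_of_tendsto_of_tendsto_of_le_of_le hlbt tendsto_const_nhds
      hlb (fun n => prob_le_one)
  -- conclude by squeezing
  refine tendsto_of_tendsto_of_tendsto_of_le_of_le' hT1 tendsto_const_nhds ?_ ?_
  · filter_upwards [hincl] with n hn
    exact measure_mono hn
  · exact Eventually.of_forall fun n => prob_le_one
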